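/- Inversion for universal quantification: if ⊢^α_1 Γ ⇒ ∀x B(x) in the infinitary calculus, then ⊢^α_1 Γ ⇒ B(n̄) for every numeral n̄, n ∈ ω. -/
import Mathlib


open Ordinal

/-- Sentences of the language `L_HA(I)`: closed equations `t = s` (closed terms
identified with their numeral values), atoms `I(t)`, propositional connectives, and
quantifiers represented by their ω-many numeral instances. -/
inductive Sent : Type
  | eq (n m : ℕ)           -- the closed equation `n̄ = m̄`
  | I (t : ℕ)              -- the atom `I(t̄)`
  | or (A B : Sent)
  | and (A B : Sent)
  | imp (A B : Sent)
  | ex (B : ℕ → Sent)      -- `∃x B(x)`, given by its instances `B(n̄)`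
  | all (B : ℕ → Sent)     -- `∀x B(x)`, given by its instances `B(n̄)`

/-- The predicate symbol `I` occurs in the sentence. -/
def containsI : Sent → Prop
  | .eq _ _ => False
  | .I _ => True
  | .or A B => containsI A ∨ containsI B
  | .and A B => containsI A ∨ containsI B
  | .imp A B => containsI A ∨ containsI B
  | .ex B => ∃ n, containsI (B n)
  | .all B => ∃ n, containsI (B n)

/-- Rank `0` sentences: sentences of `L_HA`, i.e. not containing `I`. -/
def rankZero (A : Sent) : Prop := ¬ containsI A

/-- `Deriv Φop cutOK α Γ C` : in the infinitary sequent calculus (ω-rules for `L∃`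
and `R∀`, rules `LI`/`RI` unfolding `I(t)` to `Φop t = Φ(I,t)`), the sequent
`Γ ⇒ C` has a derivation of depth `≤ α` in which every cut formula satisfies
`cutOK`.  Initial sequents: `Γ, I(t) ⇒ I(t)`; `Γ, ⊥ ⇒ A`; `Γ ⇒ ⊤`. -/
inductive Deriv (Φop : ℕ → Sent) (cutOK : Sent → Prop) :
    Ordinal → Set Sent → Sent → Prop
  | axI {α Γ t} : Sent.I t ∈ Γ → Deriv Φop cutOK α Γ (.I t)
  | axBot {α Γ C n m} : n ≠ m → Sent.eq n m ∈ Γ → Deriv Φop cutOK α Γ C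
  | axTop {α Γ n} : Deriv Φop cutOK α Γ (.eq n n)
  | orL {α γ₀ γ₁ Γ A₀ A₁ C} : γ₀ < α → γ₁ < α →
      Deriv Φop cutOK γ₀ (insert A₀ Γ) C → Deriv Φop cutOK γ₁ (insert A₁ Γ) C →
      Deriv Φop cutOK α (insert (.or A₀ A₁) Γ) C
  | orR₀ {α γ Γ A₀ A₁} : γ < α → Deriv Φop cutOK γ Γ A₀ →
      Deriv Φop cutOK α Γ (.or A₀ A₁)
  | orR₁ {α γ Γ A₀ A₁} : γ < α → Deriv Φop cutOK γ Γ A₁ →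
      Deriv Φop cutOK α Γ (.or A₀ A₁)
  | andL₀ {α γ Γ A₀ A₁ C} : γ < α →
      Deriv Φop cutOK γ (insert A₀ (insert (.and A₀ A₁) Γ)) C →
      Deriv Φop cutOK α (insert (.and A₀ A₁) Γ) C
  | andL₁ {α γ Γ A₀ A₁ C} : γ < α →
      Deriv Φop cutOK γ (insert A₁ (insert (.and A₀ A₁) Γ)) C →
      Deriv Φop cutOK α (insert (.and A₀ A₁) Γ) C
  | andR {α γ₀ γ₁ Γ A₀ A₁} : γ₀ < α → γ₁ < α →
      Deriv Φop cutOK γ₀ Γ A₀ → Deriv Φop cutOK γ₁ Γ A₁ →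
      Deriv Φop cutOK α Γ (.and A₀ A₁)
  | impL {α γ₀ γ₁ Γ A B C} : γ₀ < α → γ₁ < α →
      Deriv Φop cutOK γ₀ (insert (.imp A B) Γ) A →
      Deriv Φop cutOK γ₁ (insert B Γ) C →
      Deriv Φop cutOK α (insert (.imp A B) Γ) C
  | impR {α γ Γ A B} : γ < α → Deriv Φop cutOK γ (insert A Γ) B →
      Deriv Φop cutOK α Γ (.imp A B)
  | exL {α Γ B C} (γ : ℕ → Ordinal) : (∀ n, γ n < α) →
      (∀ n, Deriv Φop cutOK (γ n) (insert (B n) Γ) C) →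
      Deriv Φop cutOK α (insert (.ex B) Γ) C
  | exR {α γ Γ B} (n : ℕ) : γ < α → Deriv Φop cutOK γ Γ (B n) →
      Deriv Φop cutOK α Γ (.ex B)
  | allL {α γ Γ B C} (n : ℕ) : γ < α →
      Deriv Φop cutOK γ (insert (B n) (insert (.all B) Γ)) C →
      Deriv Φop cutOK α (insert (.all B) Γ) C
  | allR {α Γ B} (γ : ℕ → Ordinal) : (∀ n, γ n < α) →
      (∀ n, Deriv Φop cutOK (γ n) Γ (B n)) →
      Deriv Φop cutOK α Γ (.all B)
  | LI {α γ Γ t C} : γ < α → Deriv Φop cutOK γ (insert (Φop t) Γ) C →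
      Deriv Φop cutOK α (insert (.I t) Γ) C
  | RI {α γ Γ t} : γ < α → Deriv Φop cutOK γ Γ (Φop t) →
      Deriv Φop cutOK α Γ (.I t)
  | cut {α γ₀ γ₁ Γ Δ A C} : cutOK A → γ₀ < α → γ₁ < α →
      Deriv Φop cutOK γ₀ Γ A → Deriv Φop cutOK γ₁ (insert A Δ) C →
      Deriv Φop cutOK α (Γ ∪ Δ) C

/-- `⊢^α_1 Γ ⇒ C` : derivability with depth `≤ α` and all cut formulas of rank `0`. -/
def Deriv1 (Φop : ℕ → Sent) (α : Ordinal) (Γ : Set Sent) (C : Sent) : Prop :=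
  Deriv Φop rankZero α Γ C

lemma Deriv.mono {Φop : ℕ → Sent} {cutOK : Sent → Prop} {α β : Ordinal}
    {Γ : Set Sent} {C : Sent} (h : Deriv Φop cutOK α Γ C) (hαβ : α ≤ β) :
    Deriv Φop cutOK β Γ C := by
  induction h generalizing β with
  | axI h => exact .axI h
  | axBot h1 h2 => exact .axBot h1 h2
  | axTop => exact .axTop
  | orL h0 h1 _ _ ih0 ih1 =>
      exact .orL (lt_of_lt_of_le h0 hαβ) (lt_of_lt_of_le h1 hαβ) (ih0 le_rfl) (ih1 le_rfl)
  | orR₀ h0 _ ih => exact .orR₀ (lt_of_lt_of_le h0 hαβ) (ih le_rfl)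
  | orR₁ h0 _ ih => exact .orR₁ (lt_of_lt_of_le h0 hαβ) (ih le_rfl)
  | andL₀ h0 _ ih => exact .andL₀ (lt_of_lt_of_le h0 hαβ) (ih le_rfl)
  | andL₁ h0 _ ih => exact .andL₁ (lt_of_lt_of_le h0 hαβ) (ih le_rfl)
  | andR h0 h1 _ _ ih0 ih1 =>
      exact .andR (lt_of_lt_of_le h0 hαβ) (lt_of_lt_of_le h1 hαβ) (ih0 le_rfl) (ih1 le_rfl)
  | impL h0 h1 _ _ ih0 ih1 =>
      exact .impL (lt_of_lt_of_le h0 hαβ) (lt_of_lt_of_le h1 hαβ) (ih0 le_rfl) (ih1 le_rfl)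
  | impR h0 _ ih => exact .impR (lt_of_lt_of_le h0 hαβ) (ih le_rfl)
  | exL γ h0 _ ih =>
      exact .exL γ (fun n => lt_of_lt_of_le (h0 n) hαβ) (fun n => ih n le_rfl)
  | exR n h0 _ ih => exact .exR n (lt_of_lt_of_le h0 hαβ) (ih le_rfl)
  | allL n h0 _ ih => exact .allL n (lt_of_lt_of_le h0 hαβ) (ih le_rfl)
  | allR γ h0 _ ih =>
      exact .allR γ (fun n => lt_of_lt_of_le (h0 n) hαβ) (fun n => ih n le_rfl)
  | LI h0 _ ih => exact .LI (lt_of_lt_of_le h0 hαβ) (ih le_rfl)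
  | RI h0 _ ih => exact .RI (lt_of_lt_of_le h0 hαβ) (ih le_rfl)
  | cut hA h0 h1 _ _ ih0 ih1 =>
      exact .cut hA (lt_of_lt_of_le h0 hαβ) (lt_of_lt_of_le h1 hαβ) (ih0 le_rfl) (ih1 le_rfl)

lemma inversion_all_aux {Φop : ℕ → Sent} {cutOK : Sent → Prop} {α : Ordinal}
    {Γ : Set Sent} {C : Sent} (h : Deriv Φop cutOK α Γ C) :
    ∀ B : ℕ → Sent, C = .all B → ∀ n, Deriv Φop cutOK α Γ (B n) := by
  induction h with
  | axI _ => intro B hC; exact absurd hC (by simp)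
  | axBot h1 h2 => intro B _ n; exact .axBot h1 h2
  | axTop => intro B hC; exact absurd hC (by simp)
  | orL h0 h1 _ _ ih0 ih1 =>
      intro B hC n; exact .orL h0 h1 (ih0 B hC n) (ih1 B hC n)
  | orR₀ _ _ _ => intro B hC; exact absurd hC (by simp)
  | orR₁ _ _ _ => intro B hC; exact absurd hC (by simp)
  | andL₀ h0 _ ih => intro B hC n; exact .andL₀ h0 (ih B hC n)
  | andL₁ h0 _ ih => intro B hC n; exact .andL₁ h0 (ih B hC n)
  | andR _ _ _ _ _ _ => intro B hC; exact absurd hC (by simp)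
  | impL h0 h1 hl _ _ ih1 =>
      intro B hC n; exact .impL h0 h1 hl (ih1 B hC n)
  | impR _ _ _ => intro B hC; exact absurd hC (by simp)
  | exL γ h0 _ ih =>
      intro B hC n; exact .exL γ h0 (fun m => ih m B hC n)
  | exR _ _ _ _ => intro B hC; exact absurd hC (by simp)
  | allL m h0 _ ih => intro B hC n; exact .allL m h0 (ih B hC n)
  | allR γ h0 hd _ =>
      intro B hC n
      cases (Sent.all.injEq _ _).mp hC
      exact (hd n).mono (le_of_lt (h0 n))
  | LI h0 _ ih => intro B hC n; exact .LI h0 (ih B hC n)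
  | RI _ _ _ => intro B hC; exact absurd hC (by simp)
  | cut hA h0 h1 hl _ _ ih1 =>
      intro B hC n; exact .cut hA h0 h1 hl (ih1 B hC n)

/-- Inversion for universal quantification: if `⊢^α_1 Γ ⇒ ∀x B(x)` then
`⊢^α_1 Γ ⇒ B(n̄)` for every `n ∈ ω`. -/
theorem inversion_all (Φop : ℕ → Sent) {α : Ordinal} {Γ : Set Sent} {B : ℕ → Sent}
    (h : Deriv1 Φop α Γ (.all B)) : ∀ n : ℕ, Deriv1 Φop α Γ (B n) :=
  inversion_all_aux h B rfl
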